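/- Let R be an integral domain such that every localization of R at a prime ideal is a principal ideal ring and V(x) = {p ∈ Spec R : x ∈ p} is finite for every nonzero x ∈ R. Then R is a Dedekind domain. -/

import Mathlib

/-- At each prime, the image of an ideal `I` in the localization is generated by the
image of a single element of `I`. -/
lemma stmt19_aux {R : Type*} [CommRing R] [IsDomain R]
    (h1 : ∀ (p : Ideal R) [p.IsPrime], IsPrincipalIdealRing (Localization.AtPrime p))
    (I : Ideal R) (p : Ideal R) [p.IsPrime] :
    ∃ a ∈ I, Ideal.map (algebraMap R (Localization.AtPrime p)) I =
      Ideal.span {algebraMap R (Localization.AtPrime p) a} := by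
  haveI := h1 p
  obtain ⟨g, hg⟩ := (IsPrincipalIdealRing.principal
    (Ideal.map (algebraMap R (Localization.AtPrime p)) I)).principal
  have hgmem : g ∈ Ideal.map (algebraMap R (Localization.AtPrime p)) I := by
    rw [hg]; exact Ideal.mem_span_singleton_self g
  obtain ⟨⟨a, s⟩, ha⟩ := (IsLocalization.mem_map_algebraMap_iff p.primeCompl _).mp hgmem
  refine ⟨a, a.2, ?_⟩
  rw [hg]
  have hu : IsUnit (algebraMap R (Localization.AtPrime p) (s : R)) :=
    IsLocalization.map_units _ s
  obtain ⟨u, hu'⟩ := hu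
  have : Associated g (algebraMap R (Localization.AtPrime p) (a : R)) :=
    ⟨u, by rw [hu', ha]⟩
  exact Ideal.span_singleton_eq_span_singleton.mpr this

theorem stmt19_noetherian {R : Type*} [CommRing R] [IsDomain R]
    (h1 : ∀ (p : Ideal R) [p.IsPrime], IsPrincipalIdealRing (Localization.AtPrime p))
    (h2 : ∀ x : R, x ≠ 0 → {p : PrimeSpectrum R | x ∈ p.asIdeal}.Finite) :
    IsNoetherianRing R := by
  rw [isNoetherianRing_iff_ideal_fg]
  intro I
  rcases eq_or_ne I ⊥ with rfl | hI
  · exact ⟨∅, by simp⟩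
  obtain ⟨x, hxI, hx⟩ := Submodule.exists_mem_ne_zero_of_ne_bot hI
  -- choose local generators
  choose a haI hspan using fun p : PrimeSpectrum R =>
    stmt19_aux h1 I p.asIdeal
  have hS : {p : PrimeSpectrum R | x ∈ p.asIdeal}.Finite := h2 x hx
  set J : Ideal R := Ideal.span ({x} ∪ a '' {p : PrimeSpectrum R | x ∈ p.asIdeal}) with hJ
  have hJfg : J.FG := Submodule.fg_span (by
    exact (Set.finite_singleton x).union (hS.image a))
  have hJI : J ≤ I := by
    rw [hJ, Ideal.span_le]
    rintro y (rfl | ⟨p, _, rfl⟩)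
    · exact hxI
    · exact haI p
  have hIJ : I ≤ J := by
    apply Ideal.le_of_localization_maximal
    intro P hP
    by_cases hxP : x ∈ P
    · have hpmem : (⟨P, hP.isPrime⟩ : PrimeSpectrum R) ∈
        {p : PrimeSpectrum R | x ∈ p.asIdeal} := hxP
      have := hspan ⟨P, hP.isPrime⟩
      rw [this]
      rw [Ideal.span_singleton_le_iff_mem]
      exact Ideal.mem_map_of_mem _ (Ideal.subset_span (Or.inr ⟨_, hpmem, rfl⟩))
    · have hxJ : x ∈ J := Ideal.subset_span (Or.inl rfl)
      have hu : IsUnit (algebraMap R (Localization.AtPrime P) x) :=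
        IsLocalization.map_units _ (⟨x, hxP⟩ : P.primeCompl)
      have : Ideal.map (algebraMap R (Localization.AtPrime P)) J = ⊤ :=
        Ideal.eq_top_of_isUnit_mem _ (Ideal.mem_map_of_mem _ hxJ) hu
      rw [this]
      exact le_top
  exact (le_antisymm hJI hIJ ▸ hJfg : I.FG)

/-- An integral domain all of whose localizations at primes are principal ideal
rings and such that `V(x)` is finite for every nonzero `x` is a Dedekind domain. -/
theorem stmt19 {R : Type*} [CommRing R] [IsDomain R]
    (h1 : ∀ (p : Ideal R) [p.IsPrime], IsPrincipalIdealRing (Localization.AtPrime p))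
    (h2 : ∀ x : R, x ≠ 0 → {p : PrimeSpectrum R | x ∈ p.asIdeal}.Finite) :
    IsDedekindDomain R := by
  haveI hNoeth : IsNoetherianRing R := stmt19_noetherian h1 h2
  haveI : IsDedekindDomainDvr R := by
    constructor
    intro P hP hPprime
    haveI := hPprime
    haveI := h1 P
    haveI : IsDomain (Localization.AtPrime P) :=
      IsLocalization.isDomain_localization P.primeCompl_le_nonZeroDivisors
    rw [IsDiscreteValuationRing.iff_pid_with_one_nonzero_prime]
    refine ⟨inferInstance, ?_⟩
    have hnf : ¬ IsField (Localization.AtPrime P) :=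
      IsLocalization.AtPrime.not_isField R hP _
    refine ⟨IsLocalRing.maximalIdeal (Localization.AtPrime P),
      ⟨?_, (IsLocalRing.maximalIdeal.isMaximal _).isPrime⟩, ?_⟩
    · intro hbot
      exact hnf (IsLocalRing.isField_iff_maximalIdeal_eq.mpr hbot)
    · rintro Q ⟨hQ0, hQprime⟩
      haveI := hQprime
      have hQmax : Q.IsMaximal := IsPrime.to_maximal_ideal hQ0
      exact hQmax.eq_of_le (IsLocalRing.maximalIdeal.isMaximal _).ne_top
        (IsLocalRing.le_maximalIdeal hQprime.ne_top)
  exact IsDedekindDomainDvr.isDedekindDomain R
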